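/- arXiv:1112.6212 — 2 statements merged into one kernel-verified Lean document; each statement's English description precedes it below -/
import Mathlib

section
/- For a right-stochastic matrix A (rows sum to 1, nonnegative entries) of size N×N, the induced block maximum norm of A ⊗ I_M equals 1, where the block maximum norm of a block vector x = col{x_1,...,x_N} with x_k ∈ C^M is max_k ‖x_k‖_2 and the matrix norm is the induced operator norm. -/
open Matrix Kronecker ComplexOrder

/-- The block maximum norm of a block vector `x = col{x_1,...,x_N}` with `x_k ∈ ℂ^M`:
`‖x‖_{b,∞} = max_k ‖x_k‖_2`. -/
noncomputable def blockNorm (N M : ℕ) (x : Fin N × Fin M → ℂ) : ℝ :=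
  ⨆ k : Fin N, Real.sqrt (∑ j : Fin M, ‖x (k, j)‖ ^ 2)

/-- The matrix norm induced by the block maximum norm. -/
noncomputable def inducedBlockNorm (N M : ℕ)
    (A : Matrix (Fin N × Fin M) (Fin N × Fin M) ℂ) : ℝ :=
  sSup {r : ℝ | ∃ x : Fin N × Fin M → ℂ, x ≠ 0 ∧
    r = blockNorm N M (A.mulVec x) / blockNorm N M x}

lemma cnorm_of_nonneg (z : ℂ) (h : 0 ≤ z) : ‖z‖ = z.re := by
  rw [Complex.nonneg_iff] at h
  rw [Complex.norm_def, Complex.normSq_apply, ← h.2]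
  simpa [← sq] using Real.sqrt_sq h.1

noncomputable def blk {N M : ℕ} (y : Fin N × Fin M → ℂ) (k : Fin N) :
    EuclideanSpace ℂ (Fin M) := WithLp.toLp 2 (fun j => y (k, j))

lemma blockNorm_eq {N M : ℕ} (y : Fin N × Fin M → ℂ) :
    blockNorm N M y = ⨆ k : Fin N, ‖blk y k‖ := by
  unfold blockNorm
  congr 1; funext k
  exact (EuclideanSpace.norm_eq (blk y k)).symm

lemma block_le_blockNorm {N M : ℕ} (hN : 0 < N) (y : Fin N × Fin M → ℂ) (k : Fin N) :
    ‖blk y k‖ ≤ blockNorm N M y := by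
  rw [blockNorm_eq]
  exact le_ciSup (f := fun k => ‖blk y k‖) (Set.Finite.bddAbove (Set.finite_range _)) k

lemma blockNorm_nonneg {N M : ℕ} (hN : 0 < N) (y : Fin N × Fin M → ℂ) :
    0 ≤ blockNorm N M y := by
  have : Nonempty (Fin N) := ⟨⟨0, hN⟩⟩
  obtain ⟨k⟩ := this
  exact le_trans (norm_nonneg _) (block_le_blockNorm hN y k)

lemma mulVec_kron {N M : ℕ} (A : Matrix (Fin N) (Fin N) ℂ) (x : Fin N × Fin M → ℂ)
    (k : Fin N) (j : Fin M) :
    ((A ⊗ₖ (1 : Matrix (Fin M) (Fin M) ℂ)).mulVec x) (k, j)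
      = ∑ l : Fin N, A k l * x (l, j) := by
  simp only [Matrix.mulVec, dotProduct, Fintype.sum_prod_type, kroneckerMap_apply,
    Matrix.one_apply, mul_ite, mul_one, mul_zero, ite_mul, zero_mul]
  exact Finset.sum_congr rfl fun l _ => by simp

/-- For a right-stochastic `N × N` matrix `A` (nonnegative entries, rows summing to one),
the induced block maximum norm of `A ⊗ I_M` equals `1`. -/
theorem blockMaxNorm_kronecker_rightStochastic_eq_one
    {N M : ℕ} (hN : 0 < N) (hM : 0 < M)
    (A : Matrix (Fin N) (Fin N) ℂ)
    (hpos : ∀ i j, 0 ≤ A i j)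
    (hrow : ∀ i, ∑ j, A i j = 1) :
    inducedBlockNorm N M (A ⊗ₖ (1 : Matrix (Fin M) (Fin M) ℂ)) = 1 := by
  have hrowre : ∀ i, ∑ j, (A i j).re = 1 := by
    intro i
    have := congrArg Complex.re (hrow i)
    simpa [Complex.re_sum] using this
  -- key bound
  have key : ∀ x : Fin N × Fin M → ℂ,
      blockNorm N M ((A ⊗ₖ (1 : Matrix (Fin M) (Fin M) ℂ)).mulVec x) ≤ blockNorm N M x := by
    intro x
    have : Nonempty (Fin N) := ⟨⟨0, hN⟩⟩
    rw [blockNorm_eq]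
    apply ciSup_le
    intro k
    have hblock : blk ((A ⊗ₖ (1 : Matrix (Fin M) (Fin M) ℂ)).mulVec x) k
        = ∑ l : Fin N, A k l • blk x l := by
      ext j
      show ((A ⊗ₖ (1 : Matrix (Fin M) (Fin M) ℂ)).mulVec x) (k, j) = _
      rw [mulVec_kron]
      rw [WithLp.ofLp_sum, Finset.sum_apply]
      simp [blk, smul_eq_mul]
    rw [hblock]
    calc ‖∑ l : Fin N, A k l • blk x l‖
        ≤ ∑ l : Fin N, ‖A k l • blk x l‖ :=
          norm_sum_le _ _
      _ ≤ ∑ l : Fin N, (A k l).re * blockNorm N M x := by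
          apply Finset.sum_le_sum
          intro l _
          rw [norm_smul, cnorm_of_nonneg _ (hpos k l)]
          have h1 := (Complex.nonneg_iff.mp (hpos k l)).1
          exact mul_le_mul_of_nonneg_left (block_le_blockNorm hN x l) h1
      _ = blockNorm N M x := by rw [← Finset.sum_mul, hrowre, one_mul]
  -- positivity of blockNorm for nonzero x
  have hpos' : ∀ x : Fin N × Fin M → ℂ, x ≠ 0 → 0 < blockNorm N M x := by
    intro x hx
    rcases lt_or_eq_of_le (blockNorm_nonneg hN x) with h | h
    · exact h
    · exfalso
      apply hx
      funext p
      have := block_le_blockNorm hN x p.1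
      rw [← h] at this
      have hz : ‖blk x p.1‖ = 0 :=
        le_antisymm this (norm_nonneg _)
      have := norm_eq_zero.mp hz
      have := congrArg (fun v => v p.2) this
      simpa [blk] using this
  unfold inducedBlockNorm
  apply le_antisymm
  · apply csSup_le
    · exact ⟨1, (fun _ => 1), fun h => by
        have := congrFun h (⟨0, hN⟩, ⟨0, hM⟩); simpa using this,
        by
          have hAx : (A ⊗ₖ (1 : Matrix (Fin M) (Fin M) ℂ)).mulVec (fun _ => 1)
              = (fun _ => 1) := by
            funext p
            rcases p with ⟨k, j⟩
            rw [mulVec_kron]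
            simpa using hrow k
          rw [hAx, div_self (ne_of_gt (hpos' _ (fun h => by
            have := congrFun h (⟨0, hN⟩, ⟨0, hM⟩); simpa using this)))]⟩
    · rintro r ⟨x, hx, rfl⟩
      exact div_le_one_of_le₀ (key x) (le_of_lt (hpos' x hx))
  · apply le_csSup
    · exact ⟨1, by
        rintro r ⟨x, hx, rfl⟩
        exact div_le_one_of_le₀ (key x) (le_of_lt (hpos' x hx))⟩
    · exact ⟨(fun _ => 1), fun h => by
        have := congrFun h (⟨0, hN⟩, ⟨0, hM⟩); simpa using this,
        by
          have hAx : (A ⊗ₖ (1 : Matrix (Fin M) (Fin M) ℂ)).mulVec (fun _ => 1)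
              = (fun _ => 1) := by
            funext p
            rcases p with ⟨k, j⟩
            rw [mulVec_kron]
            simpa using hrow k
          rw [hAx, div_self (ne_of_gt (hpos' _ (fun h => by
            have := congrFun h (⟨0, hN⟩, ⟨0, hM⟩); simpa using this)))]⟩
end

section
/- If A_1 and A_2 are N×N left-stochastic matrices (columns sum to 1, nonnegative entries) and D ∈ C^{NM×NM} is block diagonal Hermitian with block size M×M, then the spectral radius satisfies ρ(A_2^T ⊗ I_M · D · A_1^T ⊗ I_M) ≤ ρ(D). In particular, if ρ(D) < 1 then the product matrix is stable. -/
open Matrix Kronecker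
open scoped ENNReal NNReal

/-! ### Auxiliary lemmas -/

/-- Norm bound for a Hermitian matrix acting on Euclidean space: if all eigenvalues are
bounded by `r` in absolute value, then `‖B y‖ ≤ r ‖y‖`. -/
lemma herm_bound_aux {M : ℕ} (B : Matrix (Fin M) (Fin M) ℂ) (hB : B.IsHermitian) (r : ℝ)
    (hr0 : 0 ≤ r) (hr : ∀ i, |hB.eigenvalues i| ≤ r) (y : EuclideanSpace ℂ (Fin M)) :
    ‖(B.toEuclideanLin y : EuclideanSpace ℂ (Fin M))‖ ≤ r * ‖y‖ := by
  set b := hB.eigenvectorBasis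
  have hrep : ∀ i, b.repr (B.toEuclideanLin y) i = (hB.eigenvalues i : ℂ) * b.repr y i := by
    intro i
    conv_lhs => rw [← b.sum_repr y]
    rw [map_sum, map_sum]
    have : ∀ j, B.toEuclideanLin (b.repr y j • b j)
        = (b.repr y j * (hB.eigenvalues j : ℂ)) • b j := by
      intro j
      rw [_root_.map_smul]
      have : B.toEuclideanLin (b j) = (hB.eigenvalues j : ℂ) • b j := by
        apply PiLp.ext
        intro m
        have := congrFun (hB.mulVec_eigenvectorBasis j) m
        simpa [toEuclideanLin_apply, Complex.real_smul] using this
      rw [this, smul_smul]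
    simp_rw [this, _root_.map_smul, OrthonormalBasis.repr_self]
    rw [show ((∑ x, (b.repr y x * (hB.eigenvalues x : ℂ)) • EuclideanSpace.single x (1:ℂ)) i)
        = ∑ x, ((b.repr y x * (hB.eigenvalues x : ℂ)) • EuclideanSpace.single x (1:ℂ)) i
      from by rw [WithLp.ofLp_sum]; exact Finset.sum_apply i Finset.univ _]
    simp [EuclideanSpace.single_apply, PiLp.smul_apply, mul_comm]
  calc ‖(B.toEuclideanLin y : EuclideanSpace ℂ (Fin M))‖
      = ‖b.repr (B.toEuclideanLin y)‖ := (b.repr.norm_map _).symm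
    _ ≤ r * ‖b.repr y‖ := by
        rw [EuclideanSpace.norm_eq, EuclideanSpace.norm_eq, ← Real.sqrt_sq hr0,
          ← Real.sqrt_mul (sq_nonneg r)]
        apply Real.sqrt_le_sqrt
        rw [Finset.mul_sum]
        apply Finset.sum_le_sum
        intro i _
        rw [hrep i]
        have : ‖(hB.eigenvalues i : ℂ) * b.repr y i‖ ≤ r * ‖b.repr y i‖ := by
          rw [norm_mul]
          apply mul_le_mul_of_nonneg_right _ (norm_nonneg _)
          simpa using hr i
        calc ‖(hB.eigenvalues i : ℂ) * b.repr y i‖ ^ 2 ≤ (r * ‖b.repr y i‖) ^ 2 :=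
              pow_le_pow_left₀ (norm_nonneg _) this 2
          _ = r ^ 2 * ‖b.repr y i‖ ^ 2 := by ring
    _ = r * ‖y‖ := by rw [b.repr.norm_map]

lemma mem_spectrum_of_eig_aux {n : Type*} [Fintype n] [DecidableEq n] (T : Matrix n n ℂ) (μ : ℂ)
    (w : n → ℂ) (hw : w ≠ 0) (h : T *ᵥ w = μ • w) : μ ∈ spectrum ℂ T := by
  rw [spectrum.mem_iff]
  intro hu
  rw [Matrix.isUnit_iff_isUnit_det, isUnit_iff_ne_zero] at hu
  apply hu
  rw [← Matrix.exists_mulVec_eq_zero_iff]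
  refine ⟨w, hw, ?_⟩
  rw [sub_mulVec, Algebra.algebraMap_eq_smul_one, smul_mulVec, one_mulVec, h, sub_self]

lemma eig_of_mem_spectrum_aux {n : Type*} [Fintype n] [DecidableEq n] (T : Matrix n n ℂ) (μ : ℂ)
    (h : μ ∈ spectrum ℂ T) : ∃ w : n → ℂ, w ≠ 0 ∧ T *ᵥ w = μ • w := by
  rw [spectrum.mem_iff] at h
  have hdet : (algebraMap ℂ (Matrix n n ℂ) μ - T).det = 0 := by
    by_contra hne
    exact h ((Matrix.isUnit_iff_isUnit_det _).mpr (isUnit_iff_ne_zero.mpr hne))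
  obtain ⟨w, hw, hmul⟩ := (Matrix.exists_mulVec_eq_zero_iff).mpr hdet
  refine ⟨w, hw, ?_⟩
  rw [sub_mulVec, Algebra.algebraMap_eq_smul_one, smul_mulVec, one_mulVec,
    sub_eq_zero] at hmul
  exact hmul.symm

lemma kron_mulVec_aux {N M : ℕ} (A : Matrix (Fin N) (Fin N) ℝ) (v : Fin N × Fin M → ℂ)
    (k : Fin N) (m : Fin M) :
    (((A.transpose.map Complex.ofReal) ⊗ₖ (1 : Matrix (Fin M) (Fin M) ℂ)) *ᵥ v) (k, m)
      = ∑ l, (A l k : ℂ) * v (l, m) := by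
  simp [mulVec, dotProduct, Fintype.sum_prod_type, Matrix.one_apply, mul_ite, ite_mul,
    mul_assoc]

lemma blockD_mulVec_aux {N M : ℕ} (D : Matrix (Fin N × Fin M) (Fin N × Fin M) ℂ)
    (hDblock : ∀ p q : Fin N × Fin M, p.1 ≠ q.1 → D p q = 0)
    (v : Fin N × Fin M → ℂ) (k : Fin N) (m : Fin M) :
    (D *ᵥ v) (k, m)
      = ((D.submatrix (fun m : Fin M => (k, m)) (fun m : Fin M => (k, m))) *ᵥ
          (fun m' => v (k, m'))) m := by
  simp only [mulVec, dotProduct, Fintype.sum_prod_type, submatrix_apply]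
  rw [Finset.sum_eq_single k]
  · intro l _ hl
    apply Finset.sum_eq_zero
    intro m' _
    rw [hDblock (k, m) (l, m') (Ne.symm hl)]
    ring
  · simp

/-- The block of a vector. -/
def blkAux {N M : ℕ} (v : Fin N × Fin M → ℂ) (k : Fin N) : EuclideanSpace ℂ (Fin M) :=
  WithLp.toLp 2 (fun m => v (k, m))

/-- The block maximum norm. -/
noncomputable def nbAux {N M : ℕ} [Nonempty (Fin N)] (v : Fin N × Fin M → ℂ) : ℝ :=
  Finset.univ.sup' Finset.univ_nonempty (fun k => ‖blkAux v k‖)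

lemma blk_le_nb {N M : ℕ} [Nonempty (Fin N)] (v : Fin N × Fin M → ℂ) (k : Fin N) :
    ‖blkAux v k‖ ≤ nbAux v := by
  unfold nbAux
  exact Finset.le_sup' (fun k => ‖blkAux v k‖) (Finset.mem_univ k)

lemma nb_stoch_aux {N M : ℕ} [Nonempty (Fin N)] (A : Matrix (Fin N) (Fin N) ℝ)
    (hpos : ∀ l k, 0 ≤ A l k) (hcol : ∀ k, ∑ l, A l k = 1) (v : Fin N × Fin M → ℂ) :
    nbAux (((A.transpose.map Complex.ofReal) ⊗ₖ (1 : Matrix (Fin M) (Fin M) ℂ)) *ᵥ v)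
      ≤ nbAux v := by
  apply Finset.sup'_le
  intro k _
  have hblkk : blkAux (((A.transpose.map Complex.ofReal) ⊗ₖ (1 : Matrix (Fin M) (Fin M) ℂ)) *ᵥ v) k
      = ∑ l, ((A l k : ℝ) : ℂ) • blkAux v l := by
    apply PiLp.ext; intro m
    rw [show ((∑ l, ((A l k : ℝ) : ℂ) • blkAux v l) m)
        = ∑ l, (((A l k : ℝ) : ℂ) • blkAux v l) m from by rw [WithLp.ofLp_sum]; exact Finset.sum_apply m Finset.univ _]
    simpa [blkAux, PiLp.smul_apply, smul_eq_mul] using kron_mulVec_aux A v k m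
  rw [hblkk]
  calc ‖∑ l, ((A l k : ℝ) : ℂ) • blkAux v l‖ ≤ ∑ l, ‖((A l k : ℝ) : ℂ) • blkAux v l‖ :=
        norm_sum_le _ _
    _ ≤ ∑ l, A l k * nbAux v := by
        apply Finset.sum_le_sum; intro l _
        rw [norm_smul, Complex.norm_real, Real.norm_eq_abs, abs_of_nonneg (hpos l k)]
        exact mul_le_mul_of_nonneg_left (blk_le_nb v l) (hpos l k)
    _ = nbAux v := by rw [← Finset.sum_mul, hcol k, one_mul]

/-! ### Main theorem -/

/-- If `A_1, A_2` are `N × N` left-stochastic matrices (nonnegative entries, columns summing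
to one) and `D` is block diagonal Hermitian with `M × M` blocks, then
`ρ((A_2ᵀ ⊗ I_M) D (A_1ᵀ ⊗ I_M)) ≤ ρ(D)`.  In particular, if `ρ(D) < 1` the product matrix
is stable. -/
theorem spectralRadius_leftStochastic_sandwich_le
    {N M : ℕ} (A1 A2 : Matrix (Fin N) (Fin N) ℝ)
    (hA1pos : ∀ l k, 0 ≤ A1 l k) (hA2pos : ∀ l k, 0 ≤ A2 l k)
    (hA1col : ∀ k, ∑ l, A1 l k = 1) (hA2col : ∀ k, ∑ l, A2 l k = 1)
    (D : Matrix (Fin N × Fin M) (Fin N × Fin M) ℂ)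
    (hDblock : ∀ p q : Fin N × Fin M, p.1 ≠ q.1 → D p q = 0)
    (hDherm : D.IsHermitian) :
    spectralRadius ℂ
        (((A2.transpose.map (Complex.ofReal)) ⊗ₖ (1 : Matrix (Fin M) (Fin M) ℂ)) * D *
          ((A1.transpose.map (Complex.ofReal)) ⊗ₖ (1 : Matrix (Fin M) (Fin M) ℂ)))
      ≤ spectralRadius ℂ D ∧
    (spectralRadius ℂ D < 1 →
      spectralRadius ℂ
        (((A2.transpose.map (Complex.ofReal)) ⊗ₖ (1 : Matrix (Fin M) (Fin M) ℂ)) * D *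
          ((A1.transpose.map (Complex.ofReal)) ⊗ₖ (1 : Matrix (Fin M) (Fin M) ℂ))) < 1) := by
  classical
  set B1 := (A1.transpose.map (Complex.ofReal)) ⊗ₖ (1 : Matrix (Fin M) (Fin M) ℂ) with hB1def
  set B2 := (A2.transpose.map (Complex.ofReal)) ⊗ₖ (1 : Matrix (Fin M) (Fin M) ℂ) with hB2def
  suffices H : spectralRadius ℂ (B2 * D * B1) ≤ spectralRadius ℂ D by
    exact ⟨H, fun h => lt_of_le_of_lt H h⟩
  unfold spectralRadius
  apply iSup₂_le
  intro lam hlam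
  obtain ⟨x, hx0, hCx⟩ := eig_of_mem_spectrum_aux _ _ hlam
  obtain ⟨p, hp⟩ := Function.ne_iff.mp hx0
  haveI hNne : Nonempty (Fin N) := ⟨p.1⟩
  haveI hMne : Nonempty (Fin M) := ⟨p.2⟩
  set Dk : Fin N → Matrix (Fin M) (Fin M) ℂ :=
    fun k => D.submatrix (fun m => (k, m)) (fun m => (k, m)) with hDkdef
  have hDk : ∀ k, (Dk k).IsHermitian := fun k => hDherm.submatrix _
  set f : Fin N × Fin M → ℝ := fun q => |(hDk q.1).eigenvalues q.2| with hfdef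
  have hne : (Finset.univ : Finset (Fin N × Fin M)).Nonempty := Finset.univ_nonempty
  set r := Finset.univ.sup' hne f with hrdef
  have hrle : ∀ k i, |(hDk k).eigenvalues i| ≤ r := fun k i =>
    Finset.le_sup' f (Finset.mem_univ (k, i))
  obtain ⟨q, -, hq⟩ := Finset.exists_mem_eq_sup' hne f
  have hr0 : 0 ≤ r := le_trans (abs_nonneg _) (hrle q.1 q.2)
  -- μ = the largest (in absolute value) eigenvalue; it lies in the spectrum of `D`.
  set μ : ℝ := (hDk q.1).eigenvalues q.2 with hμdef
  set b : EuclideanSpace ℂ (Fin M) := (hDk q.1).eigenvectorBasis q.2 with hbdef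
  have hbne : b ≠ 0 := (hDk q.1).eigenvectorBasis.orthonormal.ne_zero q.2
  set w : Fin N × Fin M → ℂ := fun pr => if pr.1 = q.1 then b pr.2 else 0 with hwdef
  have hwne : w ≠ 0 := by
    have hbm : ∃ m0, b m0 ≠ 0 := by
      by_contra hh
      push_neg at hh
      exact hbne (PiLp.ext hh)
    obtain ⟨m0, hm0⟩ := hbm
    intro hw
    apply hm0
    have := congrFun hw (q.1, m0)
    simpa [hwdef] using this
  have hDw : D *ᵥ w = (μ : ℂ) • w := by
    funext pr
    obtain ⟨l, m⟩ := pr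
    rw [blockD_mulVec_aux D hDblock w l m]
    by_cases hl : l = q.1
    · rw [hl]
      have hwq : (fun m' => w (q.1, m')) = fun m' => b m' := by
        funext m'; simp [hwdef]
      rw [hwq]
      have hb := congrFun ((hDk q.1).mulVec_eigenvectorBasis q.2) m
      simp only [Pi.smul_apply, Complex.real_smul] at hb
      have hrhs : ((μ : ℂ) • w) (q.1, m) = (μ : ℂ) * b m := by
        simp [hwdef]
      rw [hrhs]
      exact hb
    · have hwz : (fun m' => w (l, m')) = fun _ => (0 : ℂ) := by
        funext m'; simp [hwdef, hl]
      rw [hwz]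
      simp [mulVec, dotProduct, hwdef, hl]
  have hμmem : ((μ : ℝ) : ℂ) ∈ spectrum ℂ D := mem_spectrum_of_eig_aux D _ w hwne hDw
  -- the norm chain for the eigenvector `x` of the product matrix
  have hDstep : ∀ v : Fin N × Fin M → ℂ, nbAux (D *ᵥ v) ≤ r * nbAux v := by
    intro v
    apply Finset.sup'_le
    intro k _
    have hblkD : blkAux (D *ᵥ v) k = (Dk k).toEuclideanLin (blkAux v k) := by
      apply PiLp.ext; intro m
      exact blockD_mulVec_aux D hDblock v k m
    rw [hblkD]
    calc ‖(Dk k).toEuclideanLin (blkAux v k)‖ ≤ r * ‖blkAux v k‖ :=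
          herm_bound_aux _ (hDk k) r hr0 (fun i => hrle k i) _
      _ ≤ r * nbAux v := mul_le_mul_of_nonneg_left (blk_le_nb v k) hr0
  have hxpos : 0 < nbAux x := by
    have hblkne : blkAux x p.1 ≠ 0 := by
      intro h
      exact hp (congrArg (fun z : EuclideanSpace ℂ (Fin M) => z p.2) h)
    exact lt_of_lt_of_le (norm_pos_iff.mpr hblkne) (blk_le_nb x p.1)
  obtain ⟨k0, -, hk0⟩ := Finset.exists_mem_eq_sup' (Finset.univ_nonempty
    (α := Fin N)) (fun k => ‖blkAux x k‖)
  have hchain : ‖lam‖ * nbAux x ≤ r * nbAux x := by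
    calc ‖lam‖ * nbAux x = ‖lam • blkAux x k0‖ := by
          rw [norm_smul, show nbAux x = ‖blkAux x k0‖ from hk0]
      _ = ‖blkAux (lam • x) k0‖ := rfl
      _ ≤ nbAux (lam • x) := blk_le_nb _ k0
      _ = nbAux (B2 *ᵥ (D *ᵥ (B1 *ᵥ x))) := by rw [mulVec_mulVec, mulVec_mulVec, hCx]
      _ ≤ nbAux (D *ᵥ (B1 *ᵥ x)) := nb_stoch_aux A2 hA2pos hA2col _
      _ ≤ r * nbAux (B1 *ᵥ x) := hDstep _
      _ ≤ r * nbAux x := mul_le_mul_of_nonneg_left (nb_stoch_aux A1 hA1pos hA1col x) hr0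
  have hlamr : ‖lam‖ ≤ r := le_of_mul_le_mul_right
    (by simpa [mul_comm] using hchain) hxpos
  have hcoe : (‖lam‖₊ : ℝ≥0∞) ≤ (‖((μ : ℝ) : ℂ)‖₊ : ℝ≥0∞) := by
    rw [ENNReal.coe_le_coe, ← NNReal.coe_le_coe, coe_nnnorm, coe_nnnorm,
      Complex.norm_real, Real.norm_eq_abs]
    calc ‖lam‖ ≤ r := hlamr
      _ = |μ| := by rw [hrdef, hq]
  exact le_trans hcoe (le_iSup₂_of_le _ hμmem le_rfl)
end
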